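/- Let p be a prime and t ≥ 2. If C1, C2 ⊆ F_p^t satisfy ⟨v1, v2⟩ ≠ 0 for all v1 ∈ C1 and v2 ∈ C2, then |C1|·|C2| ≤ p^{t+2}. -/

import Mathlib

open Finset Module

set_option linter.unusedSectionVars false

/-- The inner product `⟨x,y⟩ = ∑ i, x i * y i`. -/
def ip {F : Type*} [CommRing F] {ι : Type*} [Fintype ι] (x y : ι → F) : F :=
  ∑ i, x i * y i

private def chi (p : ℕ) : ZMod p → ℤ := fun c => if c = 0 then 1 else 0

private def ff (p : ℕ) : ZMod p → ℤ := fun c => (p : ℤ) * chi p c - 1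

section MainAux
variable {p t : ℕ} [Fact p.Prime]

private def ipL (v : Fin t → ZMod p) : (Fin t → ZMod p) →ₗ[ZMod p] ZMod p where
  toFun x := ip x v
  map_add' x y := by simp [ip, add_mul, Finset.sum_add_distrib]
  map_smul' c x := by simp [ip, Finset.mul_sum, mul_assoc]

private lemma ipL_apply (v x : Fin t → ZMod p) : ipL v x = ip x v := rfl

private lemma ip_single (j : Fin t) (v : Fin t → ZMod p) :
    ip (Pi.single j (1 : ZMod p)) v = v j := by
  simp [ip, Pi.single_apply, Finset.sum_ite_eq]

private lemma ip_comm (x y : Fin t → ZMod p) : ip x y = ip y x := by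
  simp [ip, mul_comm]

private lemma ip_nondeg {v : Fin t → ZMod p} (hv : ∀ x, ip x v = 0) : v = 0 := by
  funext j
  simpa [ip_single] using hv (Pi.single j 1)


variable {p t : ℕ} [Fact p.Prime]

private lemma cardA' (v : Fin t → ZMod p) (hv : v ≠ 0) :
    (Finset.univ.filter (fun x : Fin t → ZMod p => ip x v = 0)).card = p ^ (t - 1) := by
  classical
  set φ := ipL (p := p) v with hφ
  -- surjectivity
  have hsurj : Function.Surjective φ := by
    obtain ⟨j, hj⟩ : ∃ j, v j ≠ 0 := by
      by_contra hcon
      push_neg at hcon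
      exact hv (funext hcon)
    intro a
    refine ⟨(a * (v j)⁻¹) • (Pi.single j 1 : Fin t → ZMod p), ?_⟩
    have : φ (Pi.single j 1) = v j := ip_single j v
    rw [map_smul]
    rw [this]
    rw [smul_eq_mul]
    field_simp
  have hrange : LinearMap.range φ = ⊤ := LinearMap.range_eq_top.mpr hsurj
  have hrk := LinearMap.finrank_range_add_finrank_ker φ
  rw [hrange] at hrk
  rw [finrank_top, Module.finrank_self, Module.finrank_pi] at hrk
  simp only [Fintype.card_fin] at hrk
  have hker : finrank (ZMod p) (LinearMap.ker φ) = t - 1 := by omega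
  have hcard : Fintype.card (LinearMap.ker φ) = p ^ (t - 1) := by
    rw [card_eq_pow_finrank (K := ZMod p), ZMod.card, hker]
  rw [← hcard]
  rw [Fintype.card_congr (Equiv.subtypeEquivRight (q := fun x => ip x v = 0)
    (fun x => by simp [LinearMap.mem_ker, hφ, ipL_apply]))]
  exact (Fintype.card_subtype _).symm

private lemma cardB' (v w : Fin t → ZMod p) (ht : 2 ≤ t)
    (hind : ∀ a b : ZMod p, a • v + b • w = 0 → a = 0 ∧ b = 0) :
    (Finset.univ.filter (fun x : Fin t → ZMod p => ip x v = 0 ∧ ip x w = 0)).card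
      = p ^ (t - 2) := by
  classical
  set L := (ipL (p := p) v).prod (ipL (p := p) w) with hL
  have hrange : LinearMap.range L = ⊤ := by
    by_contra hne
    have hlt : LinearMap.range L < ⊤ := lt_top_iff_ne_top.mpr hne
    have hfr : finrank (ZMod p) (LinearMap.range L) < finrank (ZMod p) (ZMod p × ZMod p) :=
      Submodule.finrank_lt hlt.ne
    rw [Module.finrank_prod, Module.finrank_self] at hfr
    have hone : finrank (ZMod p) (LinearMap.range L) ≤ 1 := by omega
    have hprin := (Submodule.finrank_le_one_iff_isPrincipal _).mp hone
    obtain ⟨g, hg⟩ := hprin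
    obtain ⟨c, d⟩ := g
    -- every L x is a multiple of (c, d)
    have hmul : ∀ x : Fin t → ZMod p, ip x (d • v + (-c) • w) = 0 := by
      intro x
      have hx : L x ∈ LinearMap.range L := LinearMap.mem_range_self L x
      rw [hg, Submodule.mem_span_singleton] at hx
      obtain ⟨s, hs⟩ := hx
      have h1 : ip x v = s * c := by
        have := congrArg Prod.fst hs
        simpa [hL, ipL_apply, LinearMap.prod_apply, mul_comm] using this.symm
      have h2 : ip x w = s * d := by
        have := congrArg Prod.snd hs
        simpa [hL, ipL_apply, LinearMap.prod_apply, mul_comm] using this.symm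
      have hlin : ip x (d • v + (-c) • w) = d * ip x v + (-c) * ip x w := by
        rw [ip_comm]
        rw [show ip (d • v + (-c) • w) x = (ipL x) (d • v + (-c) • w) from rfl]
        rw [map_add, map_smul, map_smul]
        simp [ipL, ip_comm, smul_eq_mul]
      rw [hlin, h1, h2]; ring
    have hz : d • v + (-c) • w = 0 := ip_nondeg (fun x => hmul x)
    obtain ⟨hd, hc⟩ := hind d (-c) hz
    have hc0 : c = 0 := by simpa using hc
    -- then range = ⊥, so v = 0, contradiction
    have hbot : LinearMap.range L = ⊥ := by
      rw [hg, hc0, hd]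
      simp
    have hv0 : v = 0 := by
      apply ip_nondeg (v := v)
      intro x
      have : L x = 0 := by
        have := LinearMap.mem_range_self L x
        rw [hbot, Submodule.mem_bot] at this
        exact this
      have := congrArg Prod.fst this
      simpa [hL, ipL_apply, LinearMap.prod_apply] using this
    have := (hind 1 0 (by simp [hv0])).1
    simpa using this
  have hrk := LinearMap.finrank_range_add_finrank_ker L
  rw [hrange, finrank_top, Module.finrank_prod, Module.finrank_self, Module.finrank_pi] at hrk
  simp only [Fintype.card_fin] at hrk
  have hker : finrank (ZMod p) (LinearMap.ker L) = t - 2 := by omega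
  have hcard : Fintype.card (LinearMap.ker L) = p ^ (t - 2) := by
    rw [card_eq_pow_finrank (K := ZMod p), ZMod.card, hker]
  rw [← hcard]
  rw [Fintype.card_congr (Equiv.subtypeEquivRight (q := fun x => ip x v = 0 ∧ ip x w = 0)
    (fun x => by simp [LinearMap.mem_ker, hL, ipL_apply, LinearMap.prod_apply, Prod.ext_iff]))]
  exact (Fintype.card_subtype _).symm

private lemma sumA (v : Fin t → ZMod p) (hv : v ≠ 0) :
    (∑ x : Fin t → ZMod p, chi p (ip x v)) = (p : ℤ) ^ (t - 1) := by
  classical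
  rw [show (∑ x : Fin t → ZMod p, chi p (ip x v))
      = ((Finset.univ.filter (fun x : Fin t → ZMod p => ip x v = 0)).card : ℤ) from
    by rw [← Finset.sum_boole]; rfl]
  exact_mod_cast congrArg (fun n : ℕ => (n : ℤ)) (cardA' v hv)

private lemma sumK (v w : Fin t → ZMod p) :
    (∑ x : Fin t → ZMod p, chi p (ip x v) * chi p (ip x w))
      = ((Finset.univ.filter (fun x : Fin t → ZMod p => ip x v = 0 ∧ ip x w = 0)).card : ℤ) := by
  classical
  rw [← Finset.sum_boole]
  apply Finset.sum_congr rfl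
  intro x _
  by_cases h1 : ip x v = 0 <;> by_cases h2 : ip x w = 0 <;> simp [chi, h1, h2]

private lemma cardV : (Fintype.card (Fin t → ZMod p) : ℤ) = (p : ℤ) ^ t := by
  rw [Fintype.card_fun, ZMod.card, Fintype.card_fin]
  push_cast; ring

-- The key per-pair expansion
private lemma Texp (ht : 2 ≤ t) (v w : Fin t → ZMod p) (hv : v ≠ 0) (hw : w ≠ 0) :
    (∑ x : Fin t → ZMod p, ff p (ip x v) * ff p (ip x w))
      = (p:ℤ)^2 * ((Finset.univ.filter
          (fun x : Fin t → ZMod p => ip x v = 0 ∧ ip x w = 0)).card : ℤ) - (p:ℤ)^t := by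
  classical
  have hpt : (p:ℤ) * (p:ℤ)^(t-1) = (p:ℤ)^t := by
    rw [← pow_succ']; congr 1; omega
  have hexp : ∀ a b : ZMod p, ff p a * ff p b
      = (p:ℤ)^2 * (chi p a * chi p b) - p * chi p a - p * chi p b + 1 := by
    intro a b; simp only [ff]; ring
  calc (∑ x : Fin t → ZMod p, ff p (ip x v) * ff p (ip x w))
      = ∑ x : Fin t → ZMod p, ((p:ℤ)^2 * (chi p (ip x v) * chi p (ip x w))
          - p * chi p (ip x v) - p * chi p (ip x w) + 1) :=
        Finset.sum_congr rfl (fun x _ => hexp _ _)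
    _ = (p:ℤ)^2 * (∑ x : Fin t → ZMod p, chi p (ip x v) * chi p (ip x w))
          - p * (∑ x : Fin t → ZMod p, chi p (ip x v))
          - p * (∑ x : Fin t → ZMod p, chi p (ip x w))
          + (Fintype.card (Fin t → ZMod p) : ℤ) := by
        rw [Finset.sum_add_distrib, Finset.sum_sub_distrib, Finset.sum_sub_distrib,
          ← Finset.mul_sum, ← Finset.mul_sum, ← Finset.mul_sum,
          Finset.sum_const, Finset.card_univ, nsmul_eq_mul, mul_one]
    _ = _ := by
        rw [sumA v hv, sumA w hw, sumK, cardV]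
        linear_combination (-2 : ℤ) * hpt

private lemma Tbound_par (ht : 2 ≤ t) (v w : Fin t → ZMod p) (hv : v ≠ 0) (hw : w ≠ 0) :
    (∑ x : Fin t → ZMod p, ff p (ip x v) * ff p (ip x w)) ≤ (p:ℤ)^(t+1) := by
  classical
  rw [Texp ht v w hv hw]
  have hKle : ((Finset.univ.filter
      (fun x : Fin t → ZMod p => ip x v = 0 ∧ ip x w = 0)).card : ℤ) ≤ (p:ℤ)^(t-1) := by
    have hsub : (Finset.univ.filter (fun x : Fin t → ZMod p => ip x v = 0 ∧ ip x w = 0))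
        ⊆ (Finset.univ.filter (fun x : Fin t → ZMod p => ip x v = 0)) := by
      intro x hx
      simp only [Finset.mem_filter] at *
      exact ⟨hx.1, hx.2.1⟩
    calc ((Finset.univ.filter (fun x : Fin t → ZMod p => ip x v = 0 ∧ ip x w = 0)).card : ℤ)
        ≤ ((Finset.univ.filter (fun x : Fin t → ZMod p => ip x v = 0)).card : ℤ) := by
          exact_mod_cast Finset.card_le_card hsub
      _ = (p:ℤ)^(t-1) := by exact_mod_cast congrArg (fun n : ℕ => (n:ℤ)) (cardA' v hv)
  have h2 : (p:ℤ)^2 * (p:ℤ)^(t-1) = (p:ℤ)^(t+1) := by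
    rw [← pow_add]; congr 1; omega
  have hppos : (0:ℤ) ≤ (p:ℤ)^t := by positivity
  nlinarith [hKle, h2, hppos, sq_nonneg (p:ℤ)]

private lemma Tbound_indep (ht : 2 ≤ t) (v w : Fin t → ZMod p) (hv : v ≠ 0) (hw : w ≠ 0)
    (hsp : w ∉ Submodule.span (ZMod p) ({v} : Set (Fin t → ZMod p))) :
    (∑ x : Fin t → ZMod p, ff p (ip x v) * ff p (ip x w)) ≤ 0 := by
  classical
  rw [Texp ht v w hv hw]
  have hind : ∀ a b : ZMod p, a • v + b • w = 0 → a = 0 ∧ b = 0 := by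
    intro a b hab
    by_cases hb : b = 0
    · subst hb
      simp only [zero_smul, add_zero] at hab
      rcases smul_eq_zero.mp hab with ha | hv0
      · exact ⟨ha, rfl⟩
      · exact absurd hv0 hv
    · exfalso
      apply hsp
      refine Submodule.mem_span_singleton.mpr ⟨-(b⁻¹ * a), ?_⟩
      have h1 : b • w = -(a • v) := eq_neg_of_add_eq_zero_right hab
      calc (-(b⁻¹ * a)) • v = b⁻¹ • (-(a • v)) := by
            rw [smul_neg, smul_smul, neg_smul]
        _ = b⁻¹ • (b • w) := by rw [h1]
        _ = w := by rw [smul_smul, inv_mul_cancel₀ hb, one_smul]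
  have hKeq := cardB' v w ht hind
  have hK : ((Finset.univ.filter
      (fun x : Fin t → ZMod p => ip x v = 0 ∧ ip x w = 0)).card : ℤ) = (p:ℤ)^(t-2) := by
    exact_mod_cast congrArg (fun n : ℕ => (n:ℤ)) hKeq
  have h2 : (p:ℤ)^2 * (p:ℤ)^(t-2) = (p:ℤ)^t := by
    rw [← pow_add]; congr 1; omega
  rw [hK]
  linarith [h2]

private lemma spanCard (v : Fin t → ZMod p) (hv : v ≠ 0) (C2 : Finset (Fin t → ZMod p))
    [DecidablePred fun w : Fin t → ZMod p =>
      w ∈ Submodule.span (ZMod p) ({v} : Set (Fin t → ZMod p))] :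
    ((C2.filter (fun w => w ∈ Submodule.span (ZMod p) ({v} : Set (Fin t → ZMod p)))).card : ℤ)
      ≤ (p : ℤ) := by
  have h1 : (C2.filter (fun w => w ∈ Submodule.span (ZMod p)
        ({v} : Set (Fin t → ZMod p)))).card
      ≤ (Finset.univ.filter (fun w => w ∈ Submodule.span (ZMod p)
        ({v} : Set (Fin t → ZMod p)))).card :=
    Finset.card_le_card (Finset.filter_subset_filter _ (Finset.subset_univ C2))
  have h2 : (Finset.univ.filter (fun w => w ∈ Submodule.span (ZMod p)
        ({v} : Set (Fin t → ZMod p)))).card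
      = Fintype.card {x : Fin t → ZMod p //
          x ∈ Submodule.span (ZMod p) ({v} : Set (Fin t → ZMod p))} :=
    (Fintype.card_subtype _).symm
  have h3 : Fintype.card ↥(Submodule.span (ZMod p) ({v} : Set (Fin t → ZMod p))) = p := by
    rw [card_eq_pow_finrank (K := ZMod p), ZMod.card, finrank_span_singleton hv, pow_one]
  have h4 : Fintype.card {x : Fin t → ZMod p //
        x ∈ Submodule.span (ZMod p) ({v} : Set (Fin t → ZMod p))}
      = Fintype.card ↥(Submodule.span (ZMod p) ({v} : Set (Fin t → ZMod p))) :=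
    Fintype.card_congr' rfl
  have : (C2.filter (fun w => w ∈ Submodule.span (ZMod p)
      ({v} : Set (Fin t → ZMod p)))).card ≤ p := by omega
  exact_mod_cast this

end MainAux

/-- for a prime `p`, `t ≥ 2`, and sets `C1, C2 ⊆ F_p^t` with
`⟨v1, v2⟩ ≠ 0` for all `v1 ∈ C1`, `v2 ∈ C2`, one has `|C1| ⋅ |C2| ≤ p^{t+2}`. -/
theorem card_mul_card_le {p t : ℕ} (hp : p.Prime) (ht : 2 ≤ t)
    (C1 C2 : Finset (Fin t → ZMod p))
    (h : ∀ v1 ∈ C1, ∀ v2 ∈ C2, ip v1 v2 ≠ 0) :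
    C1.card * C2.card ≤ p ^ (t + 2) := by
  haveI : Fact p.Prime := ⟨hp⟩
  classical
  rcases C1.eq_empty_or_nonempty with h1 | ⟨u1, hu1⟩
  · simp [h1]
  rcases C2.eq_empty_or_nonempty with h2 | h2
  · simp [h2]
  have hC2ne : ∀ v ∈ C2, v ≠ 0 := fun v hv hv0 =>
    h u1 hu1 v hv (by simp [hv0, ip])
  have hne1 : ∀ x ∈ C1, ∀ v2 ∈ C2, ff p (ip x v2) = -1 := by
    intro x hx v2 hv2
    simp [ff, chi, h x hx v2 hv2]
  -- lower bound for S
  have low : (C1.card : ℤ) * (C2.card : ℤ)^2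
      ≤ ∑ x : Fin t → ZMod p, (∑ v2 ∈ C2, ff p (ip x v2))^2 := by
    have heq : ∀ x ∈ C1, (∑ v2 ∈ C2, ff p (ip x v2))^2 = ((C2.card : ℤ))^2 := by
      intro x hx
      have : ∑ v2 ∈ C2, ff p (ip x v2) = -(C2.card : ℤ) := by
        rw [Finset.sum_congr rfl (hne1 x hx)]
        simp
      rw [this]; ring
    calc (C1.card : ℤ) * (C2.card : ℤ)^2
        = ∑ x ∈ C1, (∑ v2 ∈ C2, ff p (ip x v2))^2 := by
          rw [Finset.sum_congr rfl heq, Finset.sum_const, nsmul_eq_mul]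
      _ ≤ ∑ x : Fin t → ZMod p, (∑ v2 ∈ C2, ff p (ip x v2))^2 :=
          Finset.sum_le_sum_of_subset_of_nonneg (Finset.subset_univ C1)
            (fun x _ _ => sq_nonneg _)
  -- upper bound for S
  have up : (∑ x : Fin t → ZMod p, (∑ v2 ∈ C2, ff p (ip x v2))^2)
      ≤ (C2.card : ℤ) * (p : ℤ)^(t+2) := by
    have swap : (∑ x : Fin t → ZMod p, (∑ v2 ∈ C2, ff p (ip x v2))^2)
        = ∑ v ∈ C2, ∑ w ∈ C2, ∑ x : Fin t → ZMod p, ff p (ip x v) * ff p (ip x w) := by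
      calc (∑ x : Fin t → ZMod p, (∑ v2 ∈ C2, ff p (ip x v2))^2)
          = ∑ x : Fin t → ZMod p, ∑ v ∈ C2, ∑ w ∈ C2, ff p (ip x v) * ff p (ip x w) :=
            Finset.sum_congr rfl (fun x _ => by rw [sq, Finset.sum_mul_sum])
        _ = ∑ v ∈ C2, ∑ x : Fin t → ZMod p, ∑ w ∈ C2, ff p (ip x v) * ff p (ip x w) :=
            Finset.sum_comm
        _ = ∑ v ∈ C2, ∑ w ∈ C2, ∑ x : Fin t → ZMod p, ff p (ip x v) * ff p (ip x w) :=
            Finset.sum_congr rfl (fun v _ => Finset.sum_comm)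
    rw [swap]
    have step1 : ∀ v ∈ C2, (∑ w ∈ C2, ∑ x : Fin t → ZMod p, ff p (ip x v) * ff p (ip x w))
        ≤ ∑ w ∈ C2, (if w ∈ Submodule.span (ZMod p) ({v} : Set (Fin t → ZMod p))
            then (p:ℤ)^(t+1) else 0) := by
      intro v hv
      apply Finset.sum_le_sum
      intro w hw
      by_cases hsp : w ∈ Submodule.span (ZMod p) ({v} : Set (Fin t → ZMod p))
      · rw [if_pos hsp]
        exact Tbound_par ht v w (hC2ne v hv) (hC2ne w hw)
      · rw [if_neg hsp]
        exact Tbound_indep ht v w (hC2ne v hv) (hC2ne w hw) hsp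
    calc (∑ v ∈ C2, ∑ w ∈ C2, ∑ x : Fin t → ZMod p, ff p (ip x v) * ff p (ip x w))
        ≤ ∑ v ∈ C2, ∑ w ∈ C2, (if w ∈ Submodule.span (ZMod p)
            ({v} : Set (Fin t → ZMod p)) then (p:ℤ)^(t+1) else 0) :=
          Finset.sum_le_sum step1
      _ = ∑ v ∈ C2, ((C2.filter (fun w => w ∈ Submodule.span (ZMod p)
            ({v} : Set (Fin t → ZMod p)))).card : ℤ) * (p:ℤ)^(t+1) := by
          apply Finset.sum_congr rfl
          intro v _
          rw [← Finset.sum_filter, Finset.sum_const, nsmul_eq_mul]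
      _ ≤ ∑ v ∈ C2, (p : ℤ) * (p:ℤ)^(t+1) :=
          Finset.sum_le_sum (fun v hv =>
            mul_le_mul_of_nonneg_right (spanCard v (hC2ne v hv) C2) (by positivity))
      _ = (C2.card : ℤ) * (p : ℤ)^(t+2) := by
          rw [Finset.sum_const, nsmul_eq_mul, ← pow_succ']
  have hBpos : (0 : ℤ) < (C2.card : ℤ) := by exact_mod_cast h2.card_pos
  have key : (C1.card : ℤ) * (C2.card : ℤ) ≤ (p : ℤ)^(t+2) := by
    refine le_of_mul_le_mul_right ?_ hBpos
    calc (C1.card : ℤ) * (C2.card : ℤ) * (C2.card : ℤ)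
        = (C1.card : ℤ) * (C2.card : ℤ)^2 := by ring
      _ ≤ (C2.card : ℤ) * (p : ℤ)^(t+2) := le_trans low up
      _ = (p : ℤ)^(t+2) * (C2.card : ℤ) := by ring
  exact_mod_cast key
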